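/- (Bayes factor convergence, Theorem 2 of the paper.) Let P be the true distribution of the process {X_1, X_2, ...} with n-dimensional marginal density p_n. For i = 1,2, let model M_i have parameter space Theta_i, likelihood L_n(theta_i | M_i), prior density pi(theta_i | M_i) > 0 at some theta_i in Theta_i, posterior density pi(theta_i | X_n, M_i), and marginal m(X_n | M_i) = L_n(theta_i | M_i) pi(theta_i | M_i) / pi(theta_i | X_n, M_i). Suppose real constants h_i(theta_i) >= h_i(Theta_i) >= 0 are such that, P-almost surely, (1/n) log ( L_n(theta_i | M_i) / p_n ) converges to -h_i(theta_i) and (1/n) log pi(theta_i | X_n, M_i) converges to -( h_i(theta_i) - h_i(Theta_i) ) as n tends to infinity, for i=1,2. Then, P-almost surely, (1/n) log B_n^{(12)} converges to -( h_1(Theta_1) - h_2(Theta_2) ), where B_n^{(12)} = m(X_n | M_1) / m(X_n | M_2) is the Bayes factor. -/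

import Mathlib

open MeasureTheory Filter

/-- **Bayes factor convergence; Theorem 2 of the paper.**
`P` is the true distribution, `p n ω` the true joint density of the first `n` observations.
For `i = 1,2`, model `Mᵢ` has likelihood `Lᵢ n ω` at a fixed `θᵢ`, prior density value
`priᵢ > 0` at `θᵢ`, posterior density `postᵢ n ω` at `θᵢ`, and marginal
`m(X_n | Mᵢ) = Lᵢ n ω * priᵢ / postᵢ n ω`.  Assume constants `hᵢ ≥ hΘᵢ ≥ 0` such that,
`P`-a.s., `(1/n) log (Lᵢ n / p n) → -hᵢ` and `(1/n) log (postᵢ n) → -(hᵢ - hΘᵢ)`.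
Then, `P`-a.s., `(1/n) log B_n^{(12)} → -(hΘ₁ - hΘ₂)` where
`B_n^{(12)} = m(X_n | M₁) / m(X_n | M₂)`. -/
theorem bayes_factor_convergence
    {Ω : Type*} [MeasurableSpace Ω] (P : Measure Ω) [IsProbabilityMeasure P]
    (p L1 L2 post1 post2 : ℕ → Ω → ℝ)
    (pri1 pri2 : ℝ) (hpri1 : 0 < pri1) (hpri2 : 0 < pri2)
    (h1 h2 hΘ1 hΘ2 : ℝ)
    (hΘ1nonneg : 0 ≤ hΘ1) (hΘ2nonneg : 0 ≤ hΘ2)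
    (hh1 : hΘ1 ≤ h1) (hh2 : hΘ2 ≤ h2)
    (hpos : ∀ᵐ ω ∂P, ∀ n : ℕ, 0 < p n ω ∧ 0 < L1 n ω ∧ 0 < L2 n ω ∧
      0 < post1 n ω ∧ 0 < post2 n ω)
    (hlik1 : ∀ᵐ ω ∂P, Tendsto (fun n : ℕ => (n : ℝ)⁻¹ * Real.log (L1 n ω / p n ω))
      atTop (nhds (-h1)))
    (hlik2 : ∀ᵐ ω ∂P, Tendsto (fun n : ℕ => (n : ℝ)⁻¹ * Real.log (L2 n ω / p n ω))
      atTop (nhds (-h2)))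
    (hpost1 : ∀ᵐ ω ∂P, Tendsto (fun n : ℕ => (n : ℝ)⁻¹ * Real.log (post1 n ω))
      atTop (nhds (-(h1 - hΘ1))))
    (hpost2 : ∀ᵐ ω ∂P, Tendsto (fun n : ℕ => (n : ℝ)⁻¹ * Real.log (post2 n ω))
      atTop (nhds (-(h2 - hΘ2)))) :
    ∀ᵐ ω ∂P, Tendsto (fun n : ℕ =>
        (n : ℝ)⁻¹ * Real.log ((L1 n ω * pri1 / post1 n ω) / (L2 n ω * pri2 / post2 n ω)))
      atTop (nhds (-(hΘ1 - hΘ2))) := by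
  filter_upwards [hpos, hlik1, hlik2, hpost1, hpost2] with ω hp hl1 hl2 hq1 hq2
  have key : ∀ n : ℕ, Real.log ((L1 n ω * pri1 / post1 n ω) / (L2 n ω * pri2 / post2 n ω))
      = (Real.log (L1 n ω / p n ω) - Real.log (L2 n ω / p n ω))
        + Real.log (pri1 / pri2)
        + (Real.log (post2 n ω) - Real.log (post1 n ω)) := by
    intro n
    obtain ⟨hpn, hL1, hL2, hq1n, hq2n⟩ := hp n
    have e : (L1 n ω * pri1 / post1 n ω) / (L2 n ω * pri2 / post2 n ω)
        = ((L1 n ω / p n ω) / (L2 n ω / p n ω)) * (pri1 / pri2) * (post2 n ω / post1 n ω) := by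
      field_simp
    rw [e, Real.log_mul (by positivity) (by positivity),
      Real.log_mul (by positivity) (by positivity),
      Real.log_div (ne_of_gt (by positivity)) (ne_of_gt (by positivity)),
      Real.log_div (ne_of_gt hq2n) (ne_of_gt hq1n)]
  have hconv : Tendsto (fun n : ℕ =>
      (n : ℝ)⁻¹ * Real.log (L1 n ω / p n ω) - (n : ℝ)⁻¹ * Real.log (L2 n ω / p n ω)
      + (n : ℝ)⁻¹ * Real.log (pri1 / pri2)
      + ((n : ℝ)⁻¹ * Real.log (post2 n ω) - (n : ℝ)⁻¹ * Real.log (post1 n ω)))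
      atTop (nhds ((-h1 - -h2) + 0 + (-(h2 - hΘ2) - -(h1 - hΘ1)))) := by
    have hz : Tendsto (fun n : ℕ => (n : ℝ)⁻¹ * Real.log (pri1 / pri2)) atTop (nhds 0) := by
      simpa using (tendsto_inv_atTop_nhds_zero_nat.mul_const (Real.log (pri1 / pri2)))
    exact ((hl1.sub hl2).add hz).add (hq2.sub hq1)
  have : (-h1 - -h2) + 0 + (-(h2 - hΘ2) - -(h1 - hΘ1)) = -(hΘ1 - hΘ2) := by ring
  rw [this] at hconv
  refine hconv.congr fun n => ?_
  rw [key n]; ring
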